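/- Let X be a real random variable with E[|X|⁵] < ∞, and for ν > 0 set μ̃(ν) = 2·E[X/(1 + X²/ν)] − E[X/(1 + 2X²/ν)] and μ̃̃(ν) = 2μ̃(ν) − μ̃(ν/2). Then ν²·[(2/3)·μ̃(ν) + (1/3)·μ̃̃(ν) − E[X]] → 0 as ν → ∞; that is, the average (2/3)μ̃(ν) + (1/3)μ̃̃(ν) equals E[X] + o(ν^{-2}). -/

import Mathlib

open MeasureTheory Filter

/-- Population robust location estimand `μ(ν) = E[X/(1 + X²/ν)]`. -/
noncomputable def robustMu {Ω : Type*} [MeasurableSpace Ω] (P : Measure Ω)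
    (X : Ω → ℝ) (ν : ℝ) : ℝ :=
  ∫ ω, X ω / (1 + (X ω) ^ 2 / ν) ∂P

/-- Richardson-corrected estimand `μ̃(ν) = 2μ(ν) − μ(ν/2)
  = 2·E[X/(1 + X²/ν)] − E[X/(1 + 2X²/ν)]`. -/
noncomputable def robustMuTilde {Ω : Type*} [MeasurableSpace Ω] (P : Measure Ω)
    (X : Ω → ℝ) (ν : ℝ) : ℝ :=
  2 * robustMu P X ν - robustMu P X (ν / 2)

/-- Twice-corrected estimand `μ̃̃(ν) = 2μ̃(ν) − μ̃(ν/2)`. -/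
noncomputable def robustMuTildeTilde {Ω : Type*} [MeasurableSpace Ω] (P : Measure Ω)
    (X : Ω → ℝ) (ν : ℝ) : ℝ :=
  2 * robustMuTilde P X ν - robustMuTilde P X (ν / 2)

/-- If `E[|X|⁵| < ∞`, the average `(2/3)μ̃(ν) + (1/3)μ̃̃(ν)` equals `E[X] + o(ν⁻²)`:
`ν²·[(2/3)μ̃(ν) + (1/3)μ̃̃(ν) − E[X]] → 0` as `ν → ∞`. -/
theorem averaged_richardson_higher_order {Ω : Type*} [MeasurableSpace Ω]
    (P : Measure Ω) [IsProbabilityMeasure P]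
    {X : Ω → ℝ} (hXmeas : Measurable X)
    (h5 : Integrable (fun ω => |X ω| ^ 5) P) :
    Filter.Tendsto
      (fun ν : ℝ => ν ^ 2 *
        ((2 / 3) * robustMuTilde P X ν + (1 / 3) * robustMuTildeTilde P X ν
          - ∫ ω, X ω ∂P))
      Filter.atTop (nhds 0) := by
  set m1 := ∫ ω, X ω ∂P with hm1
  set m3 := ∫ ω, X ω ^ 3 ∂P with hm3
  set m5 := ∫ ω, X ω ^ 5 ∂P with hm5
  set R : ℝ → ℝ := fun ν => ∫ ω, X ω ^ 5 / (1 + X ω ^ 2 / ν) ∂P with hRdef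
  have hX1 : Integrable X P := by
    refine ((integrable_const (1:ℝ)).add h5).mono hXmeas.aestronglyMeasurable ?_
    filter_upwards with ω
    simp only [Pi.add_apply, Real.norm_eq_abs]
    rw [abs_of_nonneg (by positivity : (0:ℝ) ≤ 1 + |X ω| ^ 5)]
    have h0 : (0:ℝ) ≤ |X ω| := abs_nonneg _
    rcases le_total (|X ω|) 1 with h | h
    · nlinarith [pow_nonneg h0 5]
    · nlinarith [le_self_pow₀ h (by norm_num : (5:ℕ) ≠ 0)]
  have hX3 : Integrable (fun ω => X ω ^ 3) P := by
    refine ((integrable_const (1:ℝ)).add h5).mono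
      (hXmeas.pow_const 3).aestronglyMeasurable ?_
    filter_upwards with ω
    simp only [Pi.add_apply, Real.norm_eq_abs]
    rw [abs_of_nonneg (by positivity : (0:ℝ) ≤ 1 + |X ω| ^ 5), abs_pow]
    have h0 : (0:ℝ) ≤ |X ω| := abs_nonneg _
    rcases le_total (|X ω|) 1 with h | h
    · nlinarith [pow_le_one₀ h0 h (n := 3), pow_nonneg h0 5]
    · nlinarith [pow_le_pow_right₀ h (by norm_num : (3:ℕ) ≤ 5)]
  have hdpos : ∀ (ν : ℝ), 0 < ν → ∀ ω, (0:ℝ) < 1 + X ω ^ 2 / ν := by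
    intro ν hν ω; positivity
  have hRbd : ∀ (ν : ℝ), 0 < ν → ∀ ω,
      |X ω ^ 5 / (1 + X ω ^ 2 / ν)| ≤ |X ω| ^ 5 := by
    intro ν hν ω
    have hd := hdpos ν hν ω
    rw [abs_div, abs_of_pos hd, abs_pow]
    have h1 : (1:ℝ) ≤ 1 + X ω ^ 2 / ν := le_add_of_nonneg_right (by positivity)
    calc |X ω| ^ 5 / (1 + X ω ^ 2 / ν) ≤ |X ω| ^ 5 / 1 :=
        div_le_div_of_nonneg_left (by positivity) one_pos h1
      _ = |X ω| ^ 5 := div_one _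
  have hRint : ∀ (ν : ℝ), 0 < ν →
      Integrable (fun ω => X ω ^ 5 / (1 + X ω ^ 2 / ν)) P := by
    intro ν hν
    refine h5.mono ((hXmeas.pow_const 5).div
      (measurable_const.add ((hXmeas.pow_const 2).div_const ν))).aestronglyMeasurable ?_
    filter_upwards with ω
    rw [Real.norm_eq_abs, Real.norm_eq_abs, abs_of_nonneg (by positivity : (0:ℝ) ≤ |X ω| ^ 5)]
    exact hRbd ν hν ω
  have hmu : ∀ (ν : ℝ), 0 < ν → robustMu P X ν = m1 - m3 / ν + R ν / ν ^ 2 := by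
    intro ν hν
    have hν' : ν ≠ 0 := ne_of_gt hν
    have key : ∀ ω, X ω / (1 + X ω ^ 2 / ν)
        = X ω - X ω ^ 3 / ν + (X ω ^ 5 / (1 + X ω ^ 2 / ν)) / ν ^ 2 := by
      intro ω
      have hd : (1 + X ω ^ 2 / ν) ≠ 0 := ne_of_gt (hdpos ν hν ω)
      field_simp
      ring
    have hI1 : Integrable (fun ω => X ω - X ω ^ 3 / ν) P := hX1.sub (hX3.div_const ν)
    have hI3 : Integrable (fun ω => X ω ^ 3 / ν) P := hX3.div_const ν
    rw [robustMu, integral_congr_ae (Filter.Eventually.of_forall key),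
      integral_add hI1 ((hRint ν hν).div_const _),
      integral_sub hX1 hI3, integral_div, integral_div]
  have hRlim : Tendsto R atTop (nhds m5) := by
    refine tendsto_integral_filter_of_dominated_convergence (fun ω => |X ω| ^ 5)
      ?_ ?_ h5 ?_
    · exact Filter.Eventually.of_forall fun ν =>
        ((hXmeas.pow_const 5).div
          (measurable_const.add ((hXmeas.pow_const 2).div_const ν))).aestronglyMeasurable
    · filter_upwards [eventually_gt_atTop (0:ℝ)] with ν hν
      exact Filter.Eventually.of_forall fun ω => by
        rw [Real.norm_eq_abs]; exact hRbd ν hν ω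
    · refine Filter.Eventually.of_forall fun ω => ?_
      have h1 : Tendsto (fun ν : ℝ => 1 + X ω ^ 2 / ν) atTop (nhds 1) := by
        have : Tendsto (fun ν : ℝ => X ω ^ 2 / ν) atTop (nhds 0) :=
          Tendsto.div_atTop tendsto_const_nhds tendsto_id
        simpa using tendsto_const_nhds.add this
      simpa [Pi.div_def] using (tendsto_const_nhds (x := X ω ^ 5)).div h1 one_ne_zero
  have hhalf : Tendsto (fun ν : ℝ => ν / 2) atTop atTop :=
    Tendsto.atTop_div_const two_pos tendsto_id
  have key : ∀ (ν : ℝ), 0 < ν →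
      ν ^ 2 * ((2 / 3) * robustMuTilde P X ν + (1 / 3) * robustMuTildeTilde P X ν - m1)
      = (8/3) * R ν - 8 * R (ν / 2) + (16/3) * R (ν / 2 / 2) := by
    intro ν hν
    have hν' : ν ≠ 0 := ne_of_gt hν
    rw [robustMuTildeTilde, robustMuTilde, robustMuTilde, hmu ν hν,
      hmu (ν/2) (by positivity), hmu (ν/2/2) (by positivity)]
    field_simp
    ring
  have hlim : Tendsto (fun ν : ℝ => (8/3) * R ν - 8 * R (ν / 2) + (16/3) * R (ν / 2 / 2))
      atTop (nhds ((8/3) * m5 - 8 * m5 + (16/3) * m5)) := by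
    have h2 : Tendsto (fun ν : ℝ => R (ν / 2)) atTop (nhds m5) := hRlim.comp hhalf
    have h4 : Tendsto (fun ν : ℝ => R (ν / 2 / 2)) atTop (nhds m5) := by
      exact hRlim.comp (hhalf.comp hhalf)
    exact ((hRlim.const_mul _).sub (h2.const_mul _)).add (h4.const_mul _)
  have hzero : (8/3) * m5 - 8 * m5 + (16/3) * m5 = 0 := by ring
  rw [hzero] at hlim
  refine hlim.congr' ?_
  filter_upwards [eventually_gt_atTop (0:ℝ)] with ν hν
  exact (key ν hν).symm
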